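/- Let n ≥ 2. In the cyclotomic KLR algebra R_n, the number of sequences i ∈ I_n such that the idempotent e(i) is nonzero is exactly 2^(n−2) (interpreted as 1 when n = 2). -/

import Mathlib

open scoped BigOperators

/-- `I_n`: the sequences `(i_1,…,i_n)` of elements of `ZMod n` that are permutations of
`(0,1,…,n−1)`, encoded as bijections `Fin n → ZMod n` (position `k : Fin n` is the
0-based version of the paper's position `k+1`). -/
def KLRSeq (n : ℕ) : Type := {f : Fin n → ZMod n // Function.Bijective f}

instance (n : ℕ) : Finite (KLRSeq n) := by
  unfold KLRSeq
  rcases Nat.eq_zero_or_pos n with h | h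
  · subst h
    have : IsEmpty {f : Fin 0 → ZMod 0 // Function.Bijective f} := by
      constructor
      rintro ⟨f, hf⟩
      obtain ⟨x, -⟩ := hf.2 0
      exact x.elim0
    infer_instance
  · haveI : NeZero n := ⟨by omega⟩
    infer_instance

noncomputable instance (n : ℕ) : Fintype (KLRSeq n) := Fintype.ofFinite _

noncomputable instance (n : ℕ) : DecidableEq (KLRSeq n) := Classical.decEq _

/-- Generators of the KLR algebra: idempotents `e(i)`, dots `y_k`, crossings `ψ_k`. -/
inductive KLRGen (n : ℕ) : Type
  | e : KLRSeq n → KLRGen n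
  | y : Fin n → KLRGen n
  | psi : Fin (n - 1) → KLRGen n

/-- The free algebra on the KLR generators. -/
abbrev KLRFree (K : Type) [Field K] (n : ℕ) := FreeAlgebra K (KLRGen n)

namespace KLR

/-- `e(i)` in the free algebra. -/
def E (K : Type) [Field K] {n : ℕ} (i : KLRSeq n) : KLRFree K n :=
  FreeAlgebra.ι K (KLRGen.e i)

/-- `y_k` in the free algebra. -/
def Y (K : Type) [Field K] {n : ℕ} (k : Fin n) : KLRFree K n :=
  FreeAlgebra.ι K (KLRGen.y k)

/-- `ψ_k` in the free algebra. -/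
def P (K : Type) [Field K] {n : ℕ} (k : Fin (n - 1)) : KLRFree K n :=
  FreeAlgebra.ι K (KLRGen.psi k)

/-- The first strand position crossed by `ψ_k`. -/
def pos0 {n : ℕ} (k : Fin (n - 1)) : Fin n := ⟨k.val, by have := k.isLt; omega⟩

/-- The second strand position crossed by `ψ_k`. -/
def pos1 {n : ℕ} (k : Fin (n - 1)) : Fin n := ⟨k.val + 1, by have := k.isLt; omega⟩

/-- The sequence `s_k · i`, with entries `k` and `k+1` swapped. -/
def swapSeq {n : ℕ} (k : Fin (n - 1)) (i : KLRSeq n) : KLRSeq n :=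
  ⟨i.1 ∘ Equiv.swap (pos0 k) (pos1 k), i.2.comp (Equiv.swap _ _).bijective⟩

/-- The right-hand side of the quadratic relation `ψ_k² e(i) = …`, depending on how the
colors `i_k` and `i_{k+1}` are related in the quiver of affine type A on `ZMod n`
(`a → b` iff `b = a + 1` and `a ≠ b + 1`, etc.). -/
noncomputable def quadTerm (K : Type) [Field K] {n : ℕ} (k : Fin (n - 1)) (i : KLRSeq n) :
    KLRFree K n :=
  let a := i.1 (pos0 k)
  let b := i.1 (pos1 k)
  if b = a + 1 ∧ a = b + 1 then
    (Y K (pos1 k) - Y K (pos0 k)) * ((Y K (pos0 k) - Y K (pos1 k)) * E K i)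
  else if b = a + 1 ∧ a ≠ b + 1 then (Y K (pos1 k) - Y K (pos0 k)) * E K i
  else if a = b + 1 ∧ b ≠ a + 1 then (Y K (pos0 k) - Y K (pos1 k)) * E K i
  else E K i

/-- The defining relations of the cyclotomic KLR algebra `R_n` (for `Λ = Λ_0`):
the KLR relations together with the cyclotomic relations `y_1 e(i) = 0` (if `i_1 = 0`) and
`e(i) = 0` (if `i_1 ≠ 0`). -/
inductive Rel (K : Type) [Field K] (n : ℕ) : KLRFree K n → KLRFree K n → Prop
  | idem (i j : KLRSeq n) : Rel K n (E K i * E K j) (if i = j then E K i else 0)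
  | sum_eq_one : Rel K n (∑ i : KLRSeq n, E K i) 1
  | ye (k : Fin n) (i : KLRSeq n) : Rel K n (Y K k * E K i) (E K i * Y K k)
  | psie (k : Fin (n - 1)) (i : KLRSeq n) :
      Rel K n (P K k * E K i) (E K (swapSeq k i) * P K k)
  | yy (k l : Fin n) : Rel K n (Y K k * Y K l) (Y K l * Y K k)
  | psiy (k : Fin (n - 1)) (l : Fin n) (h : l.val ≠ k.val ∧ l.val ≠ k.val + 1) :
      Rel K n (P K k * Y K l) (Y K l * P K k)
  | psipsi (k l : Fin (n - 1)) (h : k.val + 1 < l.val ∨ l.val + 1 < k.val) :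
      Rel K n (P K k * P K l) (P K l * P K k)
  | psiy1 (k : Fin (n - 1)) (i : KLRSeq n) :
      Rel K n (P K k * (Y K (pos1 k) * E K i)) (Y K (pos0 k) * (P K k * E K i))
  | ypsi (k : Fin (n - 1)) (i : KLRSeq n) :
      Rel K n (Y K (pos1 k) * (P K k * E K i)) (P K k * (Y K (pos0 k) * E K i))
  | sq (k : Fin (n - 1)) (i : KLRSeq n) :
      Rel K n (P K k * (P K k * E K i)) (quadTerm K k i)
  | braid (k : Fin (n - 1)) (h : k.val + 1 < n - 1) (i : KLRSeq n) :
      Rel K n (P K k * (P K ⟨k.val + 1, h⟩ * (P K k * E K i)))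
              (P K ⟨k.val + 1, h⟩ * (P K k * (P K ⟨k.val + 1, h⟩ * E K i)))
  | cyc0 (hn : 0 < n) (i : KLRSeq n) (h : i.1 ⟨0, hn⟩ = 0) :
      Rel K n (Y K ⟨0, hn⟩ * E K i) 0
  | cyc1 (hn : 0 < n) (i : KLRSeq n) (h : i.1 ⟨0, hn⟩ ≠ 0) :
      Rel K n (E K i) 0

end KLR

/-- The cyclotomic KLR algebra `R_n` (quiver of affine type A on `ZMod n`, `α` the sum of
all simple roots, `Λ = Λ_0`): the quotient of the free algebra on the generators by the
two-sided ideal generated by the relation differences and the cyclotomic generators. -/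
abbrev CKLR (K : Type) [Field K] (n : ℕ) := RingQuot (KLR.Rel K n)

namespace KLR

/-- The quotient map from the free algebra to `R_n`. -/
noncomputable def mk (K : Type) [Field K] (n : ℕ) : KLRFree K n →ₐ[K] CKLR K n :=
  RingQuot.mkAlgHom K (Rel K n)

/-- The idempotent `e(i)` in `R_n`. -/
noncomputable def e (K : Type) [Field K] {n : ℕ} (i : KLRSeq n) : CKLR K n := mk K n (E K i)

/-- The dot `y_k` in `R_n`. -/
noncomputable def y (K : Type) [Field K] {n : ℕ} (k : Fin n) : CKLR K n := mk K n (Y K k)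

/-- The crossing `ψ_k` in `R_n`. -/
noncomputable def p (K : Type) [Field K] {n : ℕ} (k : Fin (n - 1)) : CKLR K n := mk K n (P K k)

end KLR


section Proof
open KLR

variable {n : ℕ}

/-- Non-adjacency in the quiver of affine type A on `ZMod n`. -/
def Nonadj {n : ℕ} (a b : ZMod n) : Prop := b ≠ a + 1 ∧ a ≠ b + 1

instance {n : ℕ} (a b : ZMod n) : Decidable (Nonadj a b) :=
  inferInstanceAs (Decidable (_ ∧ _))

lemma nonadj_symm {n : ℕ} {a b : ZMod n} (h : Nonadj a b) : Nonadj b a := ⟨h.2, h.1⟩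

/-- Admissibility: `j 0 = 0` and every later entry is adjacent (in the cycle `ZMod n`)
to some earlier entry. -/
def Adm {n : ℕ} (j : KLRSeq n) : Prop :=
  (∀ h : 0 < n, j.1 ⟨0, h⟩ = 0) ∧
  ∀ k : Fin n, 0 < k.val → ∃ m : Fin n, m < k ∧ (j.1 k = j.1 m + 1 ∨ j.1 k + 1 = j.1 m)

lemma pos0_ne_pos1 (k : Fin (n - 1)) : pos0 k ≠ pos1 k := by
  simp [pos0, pos1, Fin.ext_iff]

lemma swapSeq_apply_pos0 (k : Fin (n - 1)) (x : KLRSeq n) :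
    (swapSeq k x).1 (pos0 k) = x.1 (pos1 k) := by
  simp [swapSeq, Equiv.swap_apply_left]

lemma swapSeq_apply_pos1 (k : Fin (n - 1)) (x : KLRSeq n) :
    (swapSeq k x).1 (pos1 k) = x.1 (pos0 k) := by
  simp [swapSeq, Equiv.swap_apply_right]

lemma swapSeq_apply_other (k : Fin (n - 1)) (x : KLRSeq n) (p : Fin n)
    (h0 : p ≠ pos0 k) (h1 : p ≠ pos1 k) : (swapSeq k x).1 p = x.1 p := by
  simp [swapSeq, Equiv.swap_apply_of_ne_of_ne h0 h1]

lemma swapSeq_swapSeq (k : Fin (n - 1)) (x : KLRSeq n) :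
    swapSeq k (swapSeq k x) = x := by
  apply Subtype.ext; funext p
  simp [swapSeq, Equiv.swap_apply_self]

theorem mkE_eq_zero (K : Type) [Field K] (hn : 2 ≤ n) :
    ∀ (k : ℕ) (hk : k < n) (j : KLRSeq n), j.1 ⟨k, hk⟩ ≠ 0 →
    (∀ m : Fin n, m.val < k → Nonadj (j.1 m) (j.1 ⟨k, hk⟩)) →
    KLR.mk K n (KLR.E K j) = 0 := by
  intro k
  induction k with
  | zero =>
    intro hk j hne _
    have h := RingQuot.mkAlgHom_rel K (@Rel.cyc1 K _ n (by omega) j hne)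
    rw [map_zero] at h
    exact h
  | succ k ih =>
    intro hk j hne hnon
    have hk1 : k < n - 1 := by omega
    set κ : Fin (n - 1) := ⟨k, hk1⟩ with hκ
    have hp1 : pos1 κ = ⟨k + 1, hk⟩ := rfl
    have hna : Nonadj (j.1 (pos0 κ)) (j.1 (pos1 κ)) := by
      rw [hp1]; exact hnon ⟨k, by omega⟩ (Nat.lt_succ_self k)
    obtain ⟨h1, h2⟩ := hna
    have hquad : quadTerm K κ j = KLR.E K j := by
      simp [quadTerm, h1, h2]
    have e1 : KLR.mk K n (KLR.E K j)
        = KLR.mk K n (KLR.P K κ * (KLR.P K κ * KLR.E K j)) := by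
      conv_lhs => rw [← hquad]
      exact (RingQuot.mkAlgHom_rel K (Rel.sq (K := K) (n := n) κ j)).symm
    have e2 : KLR.mk K n (KLR.P K κ * KLR.E K j)
        = KLR.mk K n (KLR.E K (swapSeq κ j) * KLR.P K κ) :=
      RingQuot.mkAlgHom_rel K (Rel.psie (K := K) (n := n) κ j)
    have hmain : KLR.mk K n (KLR.E K (swapSeq κ j)) = 0 := by
      apply ih (by omega) (swapSeq κ j)
      · have : (⟨k, by omega⟩ : Fin n) = pos0 κ := rfl
        rw [this, swapSeq_apply_pos0, hp1]
        exact hne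
      · intro m hm
        have hm0 : m ≠ pos0 κ := by
          intro hh; rw [hh] at hm; have : (pos0 κ).val = k := rfl; omega
        have hm1 : m ≠ pos1 κ := by
          intro hh; rw [hh] at hm; have : (pos1 κ).val = k + 1 := rfl; omega
        have hr : (⟨k, by omega⟩ : Fin n) = pos0 κ := rfl
        rw [swapSeq_apply_other κ j m hm0 hm1, hr, swapSeq_apply_pos0, hp1]
        exact hnon m (by omega)
    rw [e1, map_mul, e2, map_mul, hmain, zero_mul, mul_zero]

theorem e_eq_zero_of_not_adm (K : Type) [Field K] (hn : 2 ≤ n) (j : KLRSeq n)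
    (h : ¬ Adm j) : KLR.e K j = 0 := by
  by_cases h0 : j.1 ⟨0, by omega⟩ = 0
  · have hex : ∃ k : Fin n, 0 < k.val ∧
        ∀ m : Fin n, m < k → ¬(j.1 k = j.1 m + 1 ∨ j.1 k + 1 = j.1 m) := by
      by_contra hc
      push_neg at hc
      exact h ⟨fun _ => h0, fun k hk => hc k hk⟩
    obtain ⟨k, hk0, hkall⟩ := hex
    have hkfin : j.1 ⟨k.val, k.isLt⟩ = j.1 k := by simp
    apply mkE_eq_zero K hn k.val k.isLt j
    · rw [hkfin]
      intro hzk
      have hek : k = ⟨0, by omega⟩ := j.2.1 (hzk.trans h0.symm)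
      rw [hek] at hk0; simp at hk0
    · intro m hm
      have := hkall m (by exact hm)
      push_neg at this
      rw [hkfin]
      exact ⟨this.1, fun hh => this.2 hh.symm⟩
  · exact mkE_eq_zero K hn 0 (by omega) j h0 (fun m hm => absurd hm (by omega))

lemma swapSeq_apply_val (k : Fin (n - 1)) (x : KLRSeq n) (p : Fin n)
    (h0 : p.val ≠ k.val) (h1 : p.val ≠ k.val + 1) : (swapSeq k x).1 p = x.1 p :=
  swapSeq_apply_other k x p (Fin.ne_of_val_ne h0) (Fin.ne_of_val_ne h1)

lemma adm_swap (hn : 2 ≤ n) (k : Fin (n - 1)) (x : KLRSeq n) (hx : Adm x)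
    (h : Nonadj (x.1 (pos0 k)) (x.1 (pos1 k))) : Adm (swapSeq k x) := by
  have hkn : k.val < n - 1 := k.isLt
  have hknz : 1 ≤ k.val := by
    by_contra hk0
    obtain ⟨m, hm, hadj⟩ := hx.2 (pos1 k) (Nat.succ_pos k.val)
    have hmv : m.val < k.val + 1 := Fin.lt_def.mp hm
    have hm0 : m = pos0 k := Fin.ext (show m.val = k.val by omega)
    rw [hm0] at hadj
    exact hadj.elim h.1 (fun h2 => h.2 h2.symm)
  constructor
  · intro h0
    rw [swapSeq_apply_val k x ⟨0, h0⟩ (show (0:ℕ) ≠ k.val by omega)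
      (show (0:ℕ) ≠ k.val + 1 by omega)]
    exact hx.1 h0
  · intro p hp
    rcases Nat.lt_trichotomy p.val k.val with hlt | heq | hgt
    · obtain ⟨m, hm, hadj⟩ := hx.2 p hp
      have hmv : m.val < p.val := Fin.lt_def.mp hm
      refine ⟨m, hm, ?_⟩
      rw [swapSeq_apply_val k x p (by omega) (by omega),
        swapSeq_apply_val k x m (by omega) (by omega)]
      exact hadj
    · have hpe : p = pos0 k := Fin.ext heq
      obtain ⟨m, hm, hadj⟩ := hx.2 (pos1 k) (Nat.succ_pos k.val)
      have hmv : m.val < k.val + 1 := Fin.lt_def.mp hm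
      have hmne : m.val ≠ k.val := by
        intro hh
        have hm0 : m = pos0 k := Fin.ext hh
        rw [hm0] at hadj
        exact hadj.elim h.1 (fun h2 => h.2 h2.symm)
      refine ⟨m, Fin.lt_def.mpr (show m.val < p.val by omega), ?_⟩
      rw [hpe, swapSeq_apply_pos0, swapSeq_apply_val k x m (by omega) (by omega)]
      exact hadj
    · rcases Nat.lt_or_ge (k.val + 1) p.val with hgt2 | hge
      · obtain ⟨m, hm, hadj⟩ := hx.2 p hp
        have hmv : m.val < p.val := Fin.lt_def.mp hm
        have hpother : (swapSeq k x).1 p = x.1 p :=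
          swapSeq_apply_val k x p (by omega) (by omega)
        rcases Nat.lt_trichotomy m.val k.val with hm1 | hm2 | hm3
        · refine ⟨m, hm, ?_⟩
          rw [hpother, swapSeq_apply_val k x m (by omega) (by omega)]
          exact hadj
        · refine ⟨pos1 k, Fin.lt_def.mpr (show k.val + 1 < p.val by omega), ?_⟩
          rw [hpother, swapSeq_apply_pos1]
          have hm0 : m = pos0 k := Fin.ext hm2
          rw [hm0] at hadj
          exact hadj
        · rcases Nat.eq_or_lt_of_le hm3 with he | hgt3
          · refine ⟨pos0 k, Fin.lt_def.mpr (show k.val < p.val by omega), ?_⟩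
            rw [hpother, swapSeq_apply_pos0]
            have hm0 : m = pos1 k := Fin.ext (show m.val = k.val + 1 by omega)
            rw [hm0] at hadj
            exact hadj
          · refine ⟨m, hm, ?_⟩
            rw [hpother, swapSeq_apply_val k x m (by omega) (by omega)]
            exact hadj
      · have hpe : p = pos1 k := Fin.ext (show p.val = k.val + 1 by omega)
        obtain ⟨m, hm, hadj⟩ := hx.2 (pos0 k) hknz
        have hmv : m.val < k.val := Fin.lt_def.mp hm
        refine ⟨m, Fin.lt_def.mpr (show m.val < p.val by omega), ?_⟩
        rw [hpe, swapSeq_apply_pos1, swapSeq_apply_val k x m (by omega) (by omega)]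
        exact hadj

/-- The admissible sequences, indexing the basis of the module used to show
that admissible idempotents are nonzero. -/
abbrev AdmT (n : ℕ) := {x : KLRSeq n // Adm x}

noncomputable def Egen (K : Type) [Field K] {n : ℕ} (i : KLRSeq n) :
    Module.End K (AdmT n → K) where
  toFun v x := if x.1 = i then v x else 0
  map_add' u v := by funext x; by_cases hx : x.1 = i <;> simp [hx]
  map_smul' c v := by funext x; by_cases hx : x.1 = i <;> simp [hx]

noncomputable def Pgen (K : Type) [Field K] {n : ℕ} (hn : 2 ≤ n) (k : Fin (n - 1)) :
    Module.End K (AdmT n → K) where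
  toFun v x := if h : Nonadj (x.1.1 (pos0 k)) (x.1.1 (pos1 k))
    then v ⟨swapSeq k x.1, adm_swap hn k x.1 x.2 h⟩ else 0
  map_add' u v := by
    funext x; by_cases hx : Nonadj (x.1.1 (pos0 k)) (x.1.1 (pos1 k)) <;> simp [hx]
  map_smul' c v := by
    funext x; by_cases hx : Nonadj (x.1.1 (pos0 k)) (x.1.1 (pos1 k)) <;> simp [hx]

noncomputable def genAct (K : Type) [Field K] {n : ℕ} (hn : 2 ≤ n) :
    KLRGen n → Module.End K (AdmT n → K)
  | KLRGen.e i => Egen K i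
  | KLRGen.y _ => 0
  | KLRGen.psi k => Pgen K hn k

noncomputable def phi (K : Type) [Field K] {n : ℕ} (hn : 2 ≤ n) :
    KLRFree K n →ₐ[K] Module.End K (AdmT n → K) :=
  FreeAlgebra.lift K (genAct K hn)

lemma phi_E (K : Type) [Field K] {n : ℕ} (hn : 2 ≤ n) (i : KLRSeq n) :
    phi K hn (KLR.E K i) = Egen K i := FreeAlgebra.lift_ι_apply _ _

lemma phi_Y (K : Type) [Field K] {n : ℕ} (hn : 2 ≤ n) (k : Fin n) :
    phi K hn (KLR.Y K k) = 0 := FreeAlgebra.lift_ι_apply _ _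

lemma phi_P (K : Type) [Field K] {n : ℕ} (hn : 2 ≤ n) (k : Fin (n - 1)) :
    phi K hn (KLR.P K k) = Pgen K hn k := FreeAlgebra.lift_ι_apply _ _

lemma Egen_apply (K : Type) [Field K] {n : ℕ} (i : KLRSeq n) (v : AdmT n → K) (x : AdmT n) :
    Egen K i v x = if x.1 = i then v x else 0 := rfl

lemma Pgen_apply_pos (K : Type) [Field K] {n : ℕ} (hn : 2 ≤ n) (k : Fin (n - 1))
    (v : AdmT n → K) (x : AdmT n) (h : Nonadj (x.1.1 (pos0 k)) (x.1.1 (pos1 k))) :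
    Pgen K hn k v x = v ⟨swapSeq k x.1, adm_swap hn k x.1 x.2 h⟩ := dif_pos h

lemma Pgen_apply_neg (K : Type) [Field K] {n : ℕ} (hn : 2 ≤ n) (k : Fin (n - 1))
    (v : AdmT n → K) (x : AdmT n) (h : ¬ Nonadj (x.1.1 (pos0 k)) (x.1.1 (pos1 k))) :
    Pgen K hn k v x = 0 := dif_neg h

lemma v_congr {K : Type} [Field K] {n : ℕ} (v : AdmT n → K) {s t : KLRSeq n}
    (hs : Adm s) (ht : Adm t) (hst : s = t) : v ⟨s, hs⟩ = v ⟨t, ht⟩ := by subst hst; rfl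

lemma ite_point_congr {K : Type} [Field K] {n : ℕ} (v : AdmT n → K) {s t : KLRSeq n}
    (hs : Adm s) (ht : Adm t) (hst : s = t) (i : KLRSeq n) :
    (if s = i then v ⟨s, hs⟩ else 0) = (if t = i then v ⟨t, ht⟩ else 0) := by subst hst; rfl

set_option maxHeartbeats 1000000 in
lemma swap_comm_apply {α : Type*} [DecidableEq α] {a b c d : α}
    (hac : a ≠ c) (had : a ≠ d) (hbc : b ≠ c) (hbd : b ≠ d) (p : α) :
    Equiv.swap a b (Equiv.swap c d p) = Equiv.swap c d (Equiv.swap a b p) := by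
  simp only [Equiv.swap_apply_def]
  split_ifs <;> simp_all

set_option maxHeartbeats 1000000 in
lemma swap_braid_apply {α : Type*} [DecidableEq α] {a b c : α}
    (hab : a ≠ b) (hac : a ≠ c) (hbc : b ≠ c) (p : α) :
    Equiv.swap a b (Equiv.swap b c (Equiv.swap a b p)) =
      Equiv.swap b c (Equiv.swap a b (Equiv.swap b c p)) := by
  simp only [Equiv.swap_apply_def]
  split_ifs <;> simp_all

lemma swapSeq_comm (k l : Fin (n - 1)) (hkl : k.val + 1 < l.val ∨ l.val + 1 < k.val)
    (x : KLRSeq n) : swapSeq l (swapSeq k x) = swapSeq k (swapSeq l x) := by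
  apply Subtype.ext; funext p
  show x.1 (Equiv.swap (pos0 k) (pos1 k) (Equiv.swap (pos0 l) (pos1 l) p))
      = x.1 (Equiv.swap (pos0 l) (pos1 l) (Equiv.swap (pos0 k) (pos1 k) p))
  refine congrArg x.1 (swap_comm_apply ?_ ?_ ?_ ?_ p)
  · exact Fin.ne_of_val_ne (show k.val ≠ l.val by omega)
  · exact Fin.ne_of_val_ne (show k.val ≠ l.val + 1 by omega)
  · exact Fin.ne_of_val_ne (show k.val + 1 ≠ l.val by omega)
  · exact Fin.ne_of_val_ne (show k.val + 1 ≠ l.val + 1 by omega)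

lemma swapSeq_braid (k : Fin (n - 1)) (h : k.val + 1 < n - 1) (x : KLRSeq n) :
    swapSeq k (swapSeq ⟨k.val + 1, h⟩ (swapSeq k x)) =
      swapSeq ⟨k.val + 1, h⟩ (swapSeq k (swapSeq ⟨k.val + 1, h⟩ x)) := by
  apply Subtype.ext; funext p
  have hpos : pos0 (⟨k.val + 1, h⟩ : Fin (n - 1)) = pos1 k := Fin.ext rfl
  show x.1 (Equiv.swap (pos0 k) (pos1 k)
      (Equiv.swap (pos0 ⟨k.val + 1, h⟩) (pos1 ⟨k.val + 1, h⟩)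
        (Equiv.swap (pos0 k) (pos1 k) p)))
    = x.1 (Equiv.swap (pos0 ⟨k.val + 1, h⟩) (pos1 ⟨k.val + 1, h⟩)
      (Equiv.swap (pos0 k) (pos1 k)
        (Equiv.swap (pos0 ⟨k.val + 1, h⟩) (pos1 ⟨k.val + 1, h⟩) p)))
  rw [hpos]
  refine congrArg x.1 (swap_braid_apply ?_ ?_ ?_ p)
  · exact Fin.ne_of_val_ne (show k.val ≠ k.val + 1 by omega)
  · exact Fin.ne_of_val_ne (show k.val ≠ k.val + 1 + 1 by omega)
  · exact Fin.ne_of_val_ne (show k.val + 1 ≠ k.val + 1 + 1 by omega)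

theorem phi_rel (K : Type) [Field K] {n : ℕ} (hn : 2 ≤ n) :
    ∀ ⦃a b : KLRFree K n⦄, Rel K n a b → phi K hn a = phi K hn b := by
  intro a b r
  cases r with
  | idem i j =>
    rw [map_mul, phi_E, phi_E]
    by_cases hij : i = j
    · subst hij
      rw [if_pos rfl, phi_E]
      refine LinearMap.ext fun v => funext fun x => ?_
      simp only [Module.End.mul_apply, Egen_apply]
      by_cases hx : x.1 = i <;> simp [hx]
    · rw [if_neg hij, map_zero]
      refine LinearMap.ext fun v => funext fun x => ?_
      simp only [Module.End.mul_apply, Egen_apply, LinearMap.zero_apply, Pi.zero_apply]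
      by_cases hx : x.1 = j
      · rw [if_pos hx, if_neg (show ¬ x.1 = i from fun hx2 => hij (hx2.symm.trans hx))]
      · rw [if_neg hx, ite_self]
  | sum_eq_one =>
    rw [map_sum, map_one]
    refine LinearMap.ext fun v => funext fun x => ?_
    simp only [LinearMap.sum_apply, phi_E]
    classical
    rw [Finset.sum_apply]
    simp only [Egen_apply]
    rw [Finset.sum_ite_eq Finset.univ x.1 (fun _ => v x)]
    simp
  | ye k i => simp [map_mul, phi_Y]
  | psie k i =>
    rw [map_mul, map_mul, phi_E, phi_E, phi_P]
    refine LinearMap.ext fun v => funext fun x => ?_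
    simp only [Module.End.mul_apply]
    by_cases hN : Nonadj (x.1.1 (pos0 k)) (x.1.1 (pos1 k))
    · rw [Pgen_apply_pos K hn k _ x hN, Egen_apply, Egen_apply,
        Pgen_apply_pos K hn k v x hN]
      have hcond : (swapSeq k x.1 = i) = (x.1 = swapSeq k i) := by
        apply propext
        constructor
        · intro hh; rw [← hh, swapSeq_swapSeq]
        · intro hh; rw [hh, swapSeq_swapSeq]
      simp only [hcond]
    · rw [Pgen_apply_neg K hn k _ x hN, Egen_apply, Pgen_apply_neg K hn k v x hN]
      simp
  | yy k l => simp [map_mul, phi_Y]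
  | psiy k l hl => simp [map_mul, phi_Y]
  | psipsi k l hkl =>
    rw [map_mul, map_mul, phi_P, phi_P]
    refine LinearMap.ext fun v => funext fun x => ?_
    simp only [Module.End.mul_apply]
    have hl0 : ∀ y : KLRSeq n, (swapSeq k y).1 (pos0 l) = y.1 (pos0 l) :=
      fun y => swapSeq_apply_val k y (pos0 l) (show l.val ≠ k.val by omega)
        (show l.val ≠ k.val + 1 by omega)
    have hl1 : ∀ y : KLRSeq n, (swapSeq k y).1 (pos1 l) = y.1 (pos1 l) :=
      fun y => swapSeq_apply_val k y (pos1 l) (show l.val + 1 ≠ k.val by omega)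
        (show l.val + 1 ≠ k.val + 1 by omega)
    have hk0 : ∀ y : KLRSeq n, (swapSeq l y).1 (pos0 k) = y.1 (pos0 k) :=
      fun y => swapSeq_apply_val l y (pos0 k) (show k.val ≠ l.val by omega)
        (show k.val ≠ l.val + 1 by omega)
    have hk1 : ∀ y : KLRSeq n, (swapSeq l y).1 (pos1 k) = y.1 (pos1 k) :=
      fun y => swapSeq_apply_val l y (pos1 k) (show k.val + 1 ≠ l.val by omega)
        (show k.val + 1 ≠ l.val + 1 by omega)
    by_cases hk : Nonadj (x.1.1 (pos0 k)) (x.1.1 (pos1 k)) <;>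
      by_cases hl : Nonadj (x.1.1 (pos0 l)) (x.1.1 (pos1 l))
    · rw [Pgen_apply_pos K hn k _ x hk]
      rw [Pgen_apply_pos K hn l _ _ (show Nonadj ((swapSeq k x.1).1 (pos0 l))
          ((swapSeq k x.1).1 (pos1 l)) by rw [hl0, hl1]; exact hl)]
      rw [Pgen_apply_pos K hn l _ x hl]
      rw [Pgen_apply_pos K hn k _ _ (show Nonadj ((swapSeq l x.1).1 (pos0 k))
          ((swapSeq l x.1).1 (pos1 k)) by rw [hk0, hk1]; exact hk)]
      exact v_congr v _ _ (swapSeq_comm k l hkl x.1)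
    · rw [Pgen_apply_pos K hn k _ x hk]
      rw [Pgen_apply_neg K hn l _ _ (show ¬ Nonadj ((swapSeq k x.1).1 (pos0 l))
          ((swapSeq k x.1).1 (pos1 l)) by rw [hl0, hl1]; exact hl)]
      rw [Pgen_apply_neg K hn l _ x hl]
    · rw [Pgen_apply_neg K hn k _ x hk]
      rw [Pgen_apply_pos K hn l _ x hl]
      rw [Pgen_apply_neg K hn k _ _ (show ¬ Nonadj ((swapSeq l x.1).1 (pos0 k))
          ((swapSeq l x.1).1 (pos1 k)) by rw [hk0, hk1]; exact hk)]
    · rw [Pgen_apply_neg K hn k _ x hk, Pgen_apply_neg K hn l _ x hl]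
  | psiy1 k i => simp [map_mul, phi_Y]
  | ypsi k i => simp [map_mul, phi_Y]
  | sq k i =>
    rw [map_mul, map_mul, phi_E, phi_P]
    by_cases hni : Nonadj (i.1 (pos0 k)) (i.1 (pos1 k))
    · have hq : quadTerm K k i = KLR.E K i := by simp [quadTerm, hni.1, hni.2]
      rw [hq, phi_E]
      refine LinearMap.ext fun v => funext fun x => ?_
      simp only [Module.End.mul_apply]
      by_cases hNx : Nonadj (x.1.1 (pos0 k)) (x.1.1 (pos1 k))
      · have hNs : Nonadj ((swapSeq k x.1).1 (pos0 k)) ((swapSeq k x.1).1 (pos1 k)) := by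
          rw [swapSeq_apply_pos0, swapSeq_apply_pos1]; exact nonadj_symm hNx
        have pf1 := adm_swap hn k x.1 x.2 hNx
        have pf2 := adm_swap hn k (swapSeq k x.1) pf1 hNs
        have hL : Pgen K hn k (Pgen K hn k (Egen K i v)) x
            = (if swapSeq k (swapSeq k x.1) = i
                then v ⟨swapSeq k (swapSeq k x.1), pf2⟩ else 0) := by
          refine Eq.trans (Pgen_apply_pos K hn k _ x hNx) ?_
          refine Eq.trans (Pgen_apply_pos K hn k _ ⟨swapSeq k x.1, pf1⟩ hNs) ?_
          exact Egen_apply K i v ⟨swapSeq k (swapSeq k x.1), pf2⟩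
        rw [hL]
        exact ite_point_congr v pf2 x.2 (swapSeq_swapSeq k x.1) i |>.trans
          (by rw [Egen_apply])
      · rw [Pgen_apply_neg K hn k _ x hNx, Egen_apply, if_neg]
        intro hh
        exact hNx (by rw [hh]; exact hni)
    · have hq0 : phi K hn (quadTerm K k i) = 0 := by
        have hcases : quadTerm K k i
              = (KLR.Y K (pos1 k) - KLR.Y K (pos0 k)) *
                  ((KLR.Y K (pos0 k) - KLR.Y K (pos1 k)) * KLR.E K i)
            ∨ quadTerm K k i = (KLR.Y K (pos1 k) - KLR.Y K (pos0 k)) * KLR.E K i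
            ∨ quadTerm K k i = (KLR.Y K (pos0 k) - KLR.Y K (pos1 k)) * KLR.E K i := by
          simp only [quadTerm]
          split_ifs with h1 h2 h3
          · exact Or.inl rfl
          · exact Or.inr (Or.inl rfl)
          · exact Or.inr (Or.inr rfl)
          · exact absurd (⟨by tauto, by tauto⟩ : Nonadj (i.1 (pos0 k)) (i.1 (pos1 k))) hni
        rcases hcases with hq | hq | hq <;>
          rw [hq] <;> simp [map_mul, map_sub, phi_Y]
      rw [hq0]
      refine LinearMap.ext fun v => funext fun x => ?_
      simp only [Module.End.mul_apply, LinearMap.zero_apply, Pi.zero_apply]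
      by_cases hNx : Nonadj (x.1.1 (pos0 k)) (x.1.1 (pos1 k))
      · have hNs : Nonadj ((swapSeq k x.1).1 (pos0 k)) ((swapSeq k x.1).1 (pos1 k)) := by
          rw [swapSeq_apply_pos0, swapSeq_apply_pos1]; exact nonadj_symm hNx
        have pf1 := adm_swap hn k x.1 x.2 hNx
        have pf2 := adm_swap hn k (swapSeq k x.1) pf1 hNs
        have hL : Pgen K hn k (Pgen K hn k (Egen K i v)) x
            = (if swapSeq k (swapSeq k x.1) = i
                then v ⟨swapSeq k (swapSeq k x.1), pf2⟩ else 0) := by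
          refine Eq.trans (Pgen_apply_pos K hn k _ x hNx) ?_
          refine Eq.trans (Pgen_apply_pos K hn k _ ⟨swapSeq k x.1, pf1⟩ hNs) ?_
          exact Egen_apply K i v ⟨swapSeq k (swapSeq k x.1), pf2⟩
        rw [hL, if_neg]
        intro hh
        rw [swapSeq_swapSeq k x.1] at hh
        exact hni (by rw [← hh]; exact hNx)
      · exact Pgen_apply_neg K hn k _ x hNx
  | braid k h i =>
    have hpos : pos0 (⟨k.val + 1, h⟩ : Fin (n - 1)) = pos1 k := Fin.ext rfl
    have E1 : ∀ y : KLRSeq n,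
        (swapSeq k y).1 (pos0 ⟨k.val + 1, h⟩) = y.1 (pos0 k) := by
      intro y; rw [hpos, swapSeq_apply_pos1]
    have E2 : ∀ y : KLRSeq n,
        (swapSeq k y).1 (pos1 ⟨k.val + 1, h⟩) = y.1 (pos1 ⟨k.val + 1, h⟩) := by
      intro y
      exact swapSeq_apply_val k y (pos1 ⟨k.val + 1, h⟩) (show k.val + 1 + 1 ≠ k.val by omega)
        (show k.val + 1 + 1 ≠ k.val + 1 by omega)
    have E3 : ∀ y : KLRSeq n,
        (swapSeq ⟨k.val + 1, h⟩ y).1 (pos0 k) = y.1 (pos0 k) := by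
      intro y
      exact swapSeq_apply_val ⟨k.val + 1, h⟩ y (pos0 k) (show k.val ≠ k.val + 1 by omega)
        (show k.val ≠ k.val + 1 + 1 by omega)
    have E4 : ∀ y : KLRSeq n,
        (swapSeq ⟨k.val + 1, h⟩ y).1 (pos1 k) = y.1 (pos1 ⟨k.val + 1, h⟩) := by
      intro y; rw [← hpos]; exact swapSeq_apply_pos0 _ y
    have E5 : ∀ y : KLRSeq n,
        (swapSeq ⟨k.val + 1, h⟩ y).1 (pos1 ⟨k.val + 1, h⟩) = y.1 (pos1 k) := by
      intro y; rw [swapSeq_apply_pos1, hpos]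
    simp only [map_mul, phi_P, phi_E]
    refine LinearMap.ext fun v => funext fun x => ?_
    simp only [Module.End.mul_apply]
    by_cases hab : Nonadj (x.1.1 (pos0 k)) (x.1.1 (pos1 k))
    · by_cases hac : Nonadj (x.1.1 (pos0 k)) (x.1.1 (pos1 ⟨k.val + 1, h⟩))
      · by_cases hbc : Nonadj (x.1.1 (pos0 ⟨k.val + 1, h⟩)) (x.1.1 (pos1 ⟨k.val + 1, h⟩))
        · -- all three nonadjacent: both sides give v at the triple swap
          have pf1 := adm_swap hn k x.1 x.2 hab
          have c2 : Nonadj ((swapSeq k x.1).1 (pos0 ⟨k.val + 1, h⟩))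
              ((swapSeq k x.1).1 (pos1 ⟨k.val + 1, h⟩)) := by
            rw [E1, E2]; exact hac
          have pf2 := adm_swap hn ⟨k.val + 1, h⟩ (swapSeq k x.1) pf1 c2
          have c3 : Nonadj ((swapSeq ⟨k.val + 1, h⟩ (swapSeq k x.1)).1 (pos0 k))
              ((swapSeq ⟨k.val + 1, h⟩ (swapSeq k x.1)).1 (pos1 k)) := by
            rw [E3, E4, swapSeq_apply_pos0, E2, ← hpos]; exact hbc
          have pf3 := adm_swap hn k (swapSeq ⟨k.val + 1, h⟩ (swapSeq k x.1)) pf2 c3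
          have hL : Pgen K hn k (Pgen K hn ⟨k.val + 1, h⟩ (Pgen K hn k (Egen K i v))) x
              = (if swapSeq k (swapSeq ⟨k.val + 1, h⟩ (swapSeq k x.1)) = i
                  then v ⟨swapSeq k (swapSeq ⟨k.val + 1, h⟩ (swapSeq k x.1)), pf3⟩ else 0) := by
            refine Eq.trans (Pgen_apply_pos K hn k _ x hab) ?_
            refine Eq.trans
              (Pgen_apply_pos K hn ⟨k.val + 1, h⟩ _ ⟨swapSeq k x.1, pf1⟩ c2) ?_
            refine Eq.trans (Pgen_apply_pos K hn k _
              ⟨swapSeq ⟨k.val + 1, h⟩ (swapSeq k x.1), pf2⟩ c3) ?_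
            exact Egen_apply K i v ⟨swapSeq k (swapSeq ⟨k.val + 1, h⟩ (swapSeq k x.1)), pf3⟩
          have pf1' := adm_swap hn ⟨k.val + 1, h⟩ x.1 x.2 hbc
          have c2' : Nonadj ((swapSeq ⟨k.val + 1, h⟩ x.1).1 (pos0 k))
              ((swapSeq ⟨k.val + 1, h⟩ x.1).1 (pos1 k)) := by
            rw [E3, E4]; exact hac
          have pf2' := adm_swap hn k (swapSeq ⟨k.val + 1, h⟩ x.1) pf1' c2'
          have c3' : Nonadj ((swapSeq k (swapSeq ⟨k.val + 1, h⟩ x.1)).1 (pos0 ⟨k.val + 1, h⟩))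
              ((swapSeq k (swapSeq ⟨k.val + 1, h⟩ x.1)).1 (pos1 ⟨k.val + 1, h⟩)) := by
            rw [E1, E2, E3, E5]; exact hab
          have pf3' := adm_swap hn ⟨k.val + 1, h⟩ (swapSeq k (swapSeq ⟨k.val + 1, h⟩ x.1)) pf2' c3'
          have hR : Pgen K hn ⟨k.val + 1, h⟩
                (Pgen K hn k (Pgen K hn ⟨k.val + 1, h⟩ (Egen K i v))) x
              = (if swapSeq ⟨k.val + 1, h⟩ (swapSeq k (swapSeq ⟨k.val + 1, h⟩ x.1)) = i
                  then v ⟨swapSeq ⟨k.val + 1, h⟩ (swapSeq k (swapSeq ⟨k.val + 1, h⟩ x.1)), pf3'⟩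
                  else 0) := by
            refine Eq.trans (Pgen_apply_pos K hn ⟨k.val + 1, h⟩ _ x hbc) ?_
            refine Eq.trans
              (Pgen_apply_pos K hn k _ ⟨swapSeq ⟨k.val + 1, h⟩ x.1, pf1'⟩ c2') ?_
            refine Eq.trans (Pgen_apply_pos K hn ⟨k.val + 1, h⟩ _
              ⟨swapSeq k (swapSeq ⟨k.val + 1, h⟩ x.1), pf2'⟩ c3') ?_
            exact Egen_apply K i v
              ⟨swapSeq ⟨k.val + 1, h⟩ (swapSeq k (swapSeq ⟨k.val + 1, h⟩ x.1)), pf3'⟩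
          rw [hL, hR]
          exact ite_point_congr v pf3 pf3' (swapSeq_braid k h x.1) i
        · -- b,c adjacent: both sides vanish
          have pf1 := adm_swap hn k x.1 x.2 hab
          have c2 : Nonadj ((swapSeq k x.1).1 (pos0 ⟨k.val + 1, h⟩))
              ((swapSeq k x.1).1 (pos1 ⟨k.val + 1, h⟩)) := by
            rw [E1, E2]; exact hac
          have pf2 := adm_swap hn ⟨k.val + 1, h⟩ (swapSeq k x.1) pf1 c2
          have c3 : ¬ Nonadj ((swapSeq ⟨k.val + 1, h⟩ (swapSeq k x.1)).1 (pos0 k))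
              ((swapSeq ⟨k.val + 1, h⟩ (swapSeq k x.1)).1 (pos1 k)) := by
            rw [E3, E4, swapSeq_apply_pos0, E2, ← hpos]; exact hbc
          have hL : Pgen K hn k (Pgen K hn ⟨k.val + 1, h⟩ (Pgen K hn k (Egen K i v))) x = 0 := by
            refine Eq.trans (Pgen_apply_pos K hn k _ x hab) ?_
            refine Eq.trans
              (Pgen_apply_pos K hn ⟨k.val + 1, h⟩ _ ⟨swapSeq k x.1, pf1⟩ c2) ?_
            exact Pgen_apply_neg K hn k _ ⟨swapSeq ⟨k.val + 1, h⟩ (swapSeq k x.1), pf2⟩ c3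
          rw [hL, Pgen_apply_neg K hn ⟨k.val + 1, h⟩ _ x hbc]
      · -- a,c adjacent: both sides vanish at the middle stage
        have pf1 := adm_swap hn k x.1 x.2 hab
        have c2 : ¬ Nonadj ((swapSeq k x.1).1 (pos0 ⟨k.val + 1, h⟩))
            ((swapSeq k x.1).1 (pos1 ⟨k.val + 1, h⟩)) := by
          rw [E1, E2]; exact hac
        have hL : Pgen K hn k (Pgen K hn ⟨k.val + 1, h⟩ (Pgen K hn k (Egen K i v))) x = 0 := by
          refine Eq.trans (Pgen_apply_pos K hn k _ x hab) ?_
          exact Pgen_apply_neg K hn ⟨k.val + 1, h⟩ _ ⟨swapSeq k x.1, pf1⟩ c2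
        rw [hL]
        by_cases hbc : Nonadj (x.1.1 (pos0 ⟨k.val + 1, h⟩)) (x.1.1 (pos1 ⟨k.val + 1, h⟩))
        · have pf1' := adm_swap hn ⟨k.val + 1, h⟩ x.1 x.2 hbc
          have c2' : ¬ Nonadj ((swapSeq ⟨k.val + 1, h⟩ x.1).1 (pos0 k))
              ((swapSeq ⟨k.val + 1, h⟩ x.1).1 (pos1 k)) := by
            rw [E3, E4]; exact hac
          refine Eq.symm ?_
          refine Eq.trans (Pgen_apply_pos K hn ⟨k.val + 1, h⟩ _ x hbc) ?_
          exact Pgen_apply_neg K hn k _ ⟨swapSeq ⟨k.val + 1, h⟩ x.1, pf1'⟩ c2'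
        · rw [Pgen_apply_neg K hn ⟨k.val + 1, h⟩ _ x hbc]
    · -- a,b adjacent: left side dies at once; right side dies at the last stage
      rw [Pgen_apply_neg K hn k _ x hab]
      by_cases hbc : Nonadj (x.1.1 (pos0 ⟨k.val + 1, h⟩)) (x.1.1 (pos1 ⟨k.val + 1, h⟩))
      · by_cases hac : Nonadj (x.1.1 (pos0 k)) (x.1.1 (pos1 ⟨k.val + 1, h⟩))
        · have pf1' := adm_swap hn ⟨k.val + 1, h⟩ x.1 x.2 hbc
          have c2' : Nonadj ((swapSeq ⟨k.val + 1, h⟩ x.1).1 (pos0 k))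
              ((swapSeq ⟨k.val + 1, h⟩ x.1).1 (pos1 k)) := by
            rw [E3, E4]; exact hac
          have pf2' := adm_swap hn k (swapSeq ⟨k.val + 1, h⟩ x.1) pf1' c2'
          have c3' : ¬ Nonadj ((swapSeq k (swapSeq ⟨k.val + 1, h⟩ x.1)).1 (pos0 ⟨k.val + 1, h⟩))
              ((swapSeq k (swapSeq ⟨k.val + 1, h⟩ x.1)).1 (pos1 ⟨k.val + 1, h⟩)) := by
            rw [E1, E2, E3, E5]; exact hab
          refine Eq.symm ?_
          refine Eq.trans (Pgen_apply_pos K hn ⟨k.val + 1, h⟩ _ x hbc) ?_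
          refine Eq.trans
            (Pgen_apply_pos K hn k _ ⟨swapSeq ⟨k.val + 1, h⟩ x.1, pf1'⟩ c2') ?_
          exact Pgen_apply_neg K hn ⟨k.val + 1, h⟩ _
            ⟨swapSeq k (swapSeq ⟨k.val + 1, h⟩ x.1), pf2'⟩ c3'
        · have pf1' := adm_swap hn ⟨k.val + 1, h⟩ x.1 x.2 hbc
          have c2' : ¬ Nonadj ((swapSeq ⟨k.val + 1, h⟩ x.1).1 (pos0 k))
              ((swapSeq ⟨k.val + 1, h⟩ x.1).1 (pos1 k)) := by
            rw [E3, E4]; exact hac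
          refine Eq.symm ?_
          refine Eq.trans (Pgen_apply_pos K hn ⟨k.val + 1, h⟩ _ x hbc) ?_
          exact Pgen_apply_neg K hn k _ ⟨swapSeq ⟨k.val + 1, h⟩ x.1, pf1'⟩ c2'
      · rw [Pgen_apply_neg K hn ⟨k.val + 1, h⟩ _ x hbc]

  | cyc0 hn0 i hi => simp [map_mul, phi_Y]
  | cyc1 hn0 i hi =>
    rw [phi_E, map_zero]
    refine LinearMap.ext fun v => funext fun x => ?_
    rw [Egen_apply, if_neg]
    · rfl
    · intro hh
      exact hi (by rw [← hh]; exact x.2.1 hn0)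

theorem e_ne_zero_of_adm (K : Type) [Field K] (hn : 2 ≤ n) (j : KLRSeq n)
    (h : Adm j) : KLR.e K j ≠ 0 := by
  intro h0
  have hΦ : RingQuot.liftAlgHom K (s := Rel K n) ⟨phi K hn, phi_rel K hn⟩ (KLR.e K j)
      = Egen K j := by
    show RingQuot.liftAlgHom K ⟨phi K hn, phi_rel K hn⟩ (KLR.mk K n (KLR.E K j)) = _
    rw [KLR.mk, RingQuot.liftAlgHom_mkAlgHom_apply, phi_E]
  rw [h0, map_zero] at hΦ
  have h1 : Egen K j (fun _ => (1 : K)) ⟨j, h⟩ = 1 := by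
    rw [Egen_apply, if_pos rfl]
  rw [← hΦ] at h1
  simp at h1

/-! ### Counting admissible sequences -/

def bitB (n : ℕ) (b : Fin (n - 2) → Bool) (p : ℕ) : Bool :=
  if h : p < n - 2 then b ⟨p, h⟩ else true

def ups (n : ℕ) (b : Fin (n - 2) → Bool) : ℕ → ℕ
  | 0 => 0
  | p + 1 => ups n b p + (if bitB n b p then 1 else 0)

def gseq (n : ℕ) (b : Fin (n - 2) → Bool) : ℕ → ℤ
  | 0 => 0
  | p + 1 => if bitB n b p then (ups n b (p + 1) : ℤ) else (ups n b (p + 1) : ℤ) - (p + 1)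

lemma ups_succ_le (n : ℕ) (b : Fin (n - 2) → Bool) (p : ℕ) :
    ups n b (p + 1) ≤ ups n b p + 1 := by
  simp only [ups]; split <;> omega

lemma ups_le_succ (n : ℕ) (b : Fin (n - 2) → Bool) (p : ℕ) :
    ups n b p ≤ ups n b (p + 1) := by
  simp only [ups]; split <;> omega

lemma ups_add_le (n : ℕ) (b : Fin (n - 2) → Bool) (p : ℕ) :
    ∀ d, ups n b (p + d) ≤ ups n b p + d ∧ ups n b p ≤ ups n b (p + d) := by
  intro d
  induction d with
  | zero => simp
  | succ d ih =>
    have h1 := ups_succ_le n b (p + d)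
    have h2 := ups_le_succ n b (p + d)
    rw [show p + (d + 1) = p + d + 1 from rfl]
    omega

lemma ups_mono (n : ℕ) (b : Fin (n - 2) → Bool) {p q : ℕ} (h : p ≤ q) :
    ups n b p ≤ ups n b q := by
  obtain ⟨d, rfl⟩ := Nat.exists_eq_add_of_le h
  exact (ups_add_le n b p d).2

lemma ups_sub (n : ℕ) (b : Fin (n - 2) → Bool) {p q : ℕ} (h : p ≤ q) :
    ups n b q ≤ ups n b p + (q - p) := by
  obtain ⟨d, rfl⟩ := Nat.exists_eq_add_of_le h
  have := (ups_add_le n b p d).1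
  have h2 : p + d - p = d := by omega
  omega

lemma g_le (n : ℕ) (b : Fin (n - 2) → Bool) (p : ℕ) :
    gseq n b p ≤ (ups n b p : ℤ) := by
  cases p with
  | zero => simp [gseq, ups]
  | succ p => simp only [gseq]; split <;> omega

lemma g_ge (n : ℕ) (b : Fin (n - 2) → Bool) (p : ℕ) :
    (ups n b p : ℤ) - p ≤ gseq n b p := by
  cases p with
  | zero => simp [gseq, ups]
  | succ p => simp only [gseq]; split <;> omega

lemma g_cover (n : ℕ) (b : Fin (n - 2) → Bool) :
    ∀ (p : ℕ) (w : ℤ), (ups n b p : ℤ) - p ≤ w → w ≤ (ups n b p : ℤ) →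
      ∃ m, m ≤ p ∧ gseq n b m = w := by
  intro p
  induction p with
  | zero =>
    intro w h1 h2
    refine ⟨0, le_rfl, ?_⟩
    simp only [ups, Nat.cast_zero] at h1 h2
    simp only [gseq]
    omega
  | succ p ih =>
    intro w h1 h2
    cases hB : bitB n b p with
    | true =>
      have hU : ups n b (p + 1) = ups n b p + 1 := by simp [ups, hB]
      rcases eq_or_lt_of_le h2 with he | hlt
      · exact ⟨p + 1, le_rfl, by simp [gseq, hB, he]⟩
      · obtain ⟨m, hm, hg⟩ := ih w (by rw [hU] at h1; push_cast at h1 ⊢; omega)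
          (by rw [hU] at hlt; push_cast at hlt ⊢; omega)
        exact ⟨m, le_trans hm (Nat.le_succ p), hg⟩
    | false =>
      have hU : ups n b (p + 1) = ups n b p := by simp [ups, hB]
      rcases eq_or_lt_of_le h1 with he | hlt
      · refine ⟨p + 1, le_rfl, ?_⟩
        simp [gseq, hB]
        omega
      · obtain ⟨m, hm, hg⟩ := ih w (by rw [hU] at hlt; push_cast at hlt ⊢; omega)
          (by rw [hU] at h2; omega)
        exact ⟨m, le_trans hm (Nat.le_succ p), hg⟩

lemma g_inj (n : ℕ) (b : Fin (n - 2) → Bool) {p q : ℕ} (h : p < q) :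
    gseq n b p ≠ gseq n b q := by
  obtain ⟨q', rfl⟩ : ∃ q', q = q' + 1 := ⟨q - 1, by omega⟩
  have hp : p ≤ q' := by omega
  have h1 := g_le n b p
  have h2 := g_ge n b p
  have hm := ups_mono n b hp
  have hs := ups_sub n b hp
  have hqp : (↑(q' - p) : ℤ) = (q' : ℤ) - p := by push_cast [hp]; ring
  cases hB : bitB n b q' with
  | true =>
    have hU : ups n b (q' + 1) = ups n b q' + 1 := by simp [ups, hB]
    have hg : gseq n b (q' + 1) = (ups n b (q' + 1) : ℤ) := by simp [gseq, hB]
    rw [hg, hU]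
    push_cast
    omega
  | false =>
    have hU : ups n b (q' + 1) = ups n b q' := by simp [ups, hB]
    have hg : gseq n b (q' + 1) = (ups n b (q' + 1) : ℤ) - (q' + 1) := by
      simp [gseq, hB]
    rw [hg, hU]
    push_cast
    omega

lemma g_window (n : ℕ) (b : Fin (n - 2) → Bool) {p : ℕ} (hp : p ≤ n - 1) :
    (ups n b (n - 1) : ℤ) - (n - 1 : ℕ) ≤ gseq n b p ∧
      gseq n b p ≤ (ups n b (n - 1) : ℤ) := by
  have h1 := g_le n b p
  have h2 := g_ge n b p
  have hm := ups_mono n b hp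
  have hs := ups_sub n b hp
  constructor
  · have : (↑(n - 1 - p) : ℤ) = (↑(n - 1 : ℕ) : ℤ) - p := by push_cast [hp]; ring
    push_cast at h2 hs ⊢
    omega
  · push_cast at h1 hm ⊢
    omega

lemma gmod_inj (n : ℕ) (hn : 2 ≤ n) (b : Fin (n - 2) → Bool) {p q : ℕ}
    (hp : p ≤ n - 1) (hq : q ≤ n - 1)
    (h : ((gseq n b p : ℤ) : ZMod n) = ((gseq n b q : ℤ) : ZMod n)) : p = q := by
  by_contra hne
  have hdvd : (n : ℤ) ∣ gseq n b q - gseq n b p :=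
    (ZMod.intCast_eq_intCast_iff _ _ _).mp h |>.dvd
  have hwp := g_window n b hp
  have hwq := g_window n b hq
  have hnz : gseq n b p ≠ gseq n b q := by
    rcases Nat.lt_or_ge p q with hlt | hge
    · exact g_inj n b hlt
    · exact fun hh => g_inj n b (show q < p by omega) hh.symm
  have hb1 : (↑(n - 1 : ℕ) : ℤ) = (n : ℤ) - 1 := by push_cast [show 1 ≤ n by omega]; ring
  rcases hdvd with ⟨t, ht⟩
  rcases lt_trichotomy t 0 with h0 | h0 | h0
  · have : gseq n b q - gseq n b p ≤ -n := by
      rw [ht]; have : (n : ℤ) * t ≤ n * (-1) := by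
        apply mul_le_mul_of_nonneg_left (by omega) (by positivity)
      omega
    omega
  · subst h0; simp at ht; omega
  · have : (n : ℤ) ≤ gseq n b q - gseq n b p := by
      rw [ht]
      have : (n : ℤ) * 1 ≤ n * t := by
        apply mul_le_mul_of_nonneg_left (by omega) (by positivity)
      omega
    omega

def seqOf (n : ℕ) (hn : 2 ≤ n) (b : Fin (n - 2) → Bool) : KLRSeq n := by
  refine ⟨fun p => ((gseq n b p.val : ℤ) : ZMod n), ?_⟩
  haveI : NeZero n := ⟨by omega⟩
  rw [Fintype.bijective_iff_injective_and_card]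
  constructor
  · intro p q hpq
    exact Fin.ext (gmod_inj n hn b (by have := p.isLt; omega) (by have := q.isLt; omega) hpq)
  · simp [ZMod.card]

lemma seqOf_apply (n : ℕ) (hn : 2 ≤ n) (b : Fin (n - 2) → Bool) (p : Fin n) :
    (seqOf n hn b).1 p = ((gseq n b p.val : ℤ) : ZMod n) := rfl

lemma adm_seqOf (n : ℕ) (hn : 2 ≤ n) (b : Fin (n - 2) → Bool) : Adm (seqOf n hn b) := by
  constructor
  · intro h
    rw [seqOf_apply]
    simp [gseq]
  · intro k hk
    obtain ⟨q', hq'⟩ : ∃ q', k.val = q' + 1 := ⟨k.val - 1, by omega⟩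
    cases hB : bitB n b q' with
    | true =>
      obtain ⟨m, hm, hg⟩ := g_cover n b q' (ups n b q') (by omega) le_rfl
      refine ⟨⟨m, by have := k.isLt; omega⟩, Fin.lt_def.mpr (by simp; omega), Or.inl ?_⟩
      rw [seqOf_apply, seqOf_apply]
      simp only
      rw [hg]
      have : gseq n b k.val = (ups n b q' : ℤ) + 1 := by
        rw [hq']
        simp [gseq, ups, hB]
      rw [this]
      push_cast
      ring
    | false =>
      obtain ⟨m, hm, hg⟩ := g_cover n b q' ((ups n b q' : ℤ) - q') le_rfl (by omega)
      refine ⟨⟨m, by have := k.isLt; omega⟩, Fin.lt_def.mpr (by simp; omega), Or.inr ?_⟩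
      rw [seqOf_apply, seqOf_apply]
      simp only
      rw [hg]
      have : gseq n b k.val = (ups n b q' : ℤ) - q' - 1 := by
        rw [hq']
        have hU : ups n b (q' + 1) = ups n b q' := by simp [ups, hB]
        simp only [gseq, hB, if_false, hU]
        push_cast
        ring
      rw [this]
      push_cast
      ring

def encode {n : ℕ} (j : KLRSeq n) : Fin (n - 2) → Bool := fun p =>
  decide (∃ m : Fin n, m.val ≤ p.val ∧
    j.1 ⟨p.val + 1, by have := p.isLt; omega⟩ = j.1 m + 1)

lemma encode_seqOf (n : ℕ) (hn : 2 ≤ n) (b : Fin (n - 2) → Bool) :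
    encode (seqOf n hn b) = b := by
  funext p
  have hplt : p.val < n - 2 := p.isLt
  have hbit : bitB n b p.val = b p := by
    simp [bitB, hplt]
  rw [encode]
  cases hb : b p with
  | true =>
    apply decide_eq_true
    obtain ⟨m, hm, hg⟩ := g_cover n b p.val (ups n b p.val) (by omega) le_rfl
    refine ⟨⟨m, by omega⟩, by simpa using hm, ?_⟩
    rw [seqOf_apply, seqOf_apply]
    simp only
    rw [hg]
    have : gseq n b (p.val + 1) = (ups n b p.val : ℤ) + 1 := by
      simp [gseq, ups, hbit, hb]
    rw [this]
    push_cast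
    ring
  | false =>
    apply decide_eq_false
    rintro ⟨m, hm, heq⟩
    rw [seqOf_apply, seqOf_apply] at heq
    have hg1 : gseq n b (p.val + 1) = (ups n b p.val : ℤ) - (p.val + 1) := by
      have hU : ups n b (p.val + 1) = ups n b p.val := by simp [ups, hbit, hb]
      simp only [gseq, hbit, hb, if_false, hU]
      push_cast
      ring
    have hcast : ((gseq n b m.val + 1 - gseq n b (p.val + 1) : ℤ) : ZMod n) = 0 := by
      push_cast
      rw [← heq]
      ring
    haveI : NeZero n := ⟨by omega⟩
    have hdvd : (n : ℤ) ∣ gseq n b m.val + 1 - gseq n b (p.val + 1) :=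
      (ZMod.intCast_zmod_eq_zero_iff_dvd _ _).mp hcast
    have hub := g_le n b m.val
    have hlb := g_ge n b m.val
    have hmono := ups_mono n b (show m.val ≤ p.val from hm)
    have hsub := ups_sub n b (show m.val ≤ p.val from hm)
    have hrange : 0 < gseq n b m.val + 1 - gseq n b (p.val + 1) ∧
        gseq n b m.val + 1 - gseq n b (p.val + 1) < n := by
      rw [hg1]
      have hq : (↑(p.val - m.val) : ℤ) = (p.val : ℤ) - m.val := by
        push_cast [show m.val ≤ p.val from hm]; ring
      constructor
      · push_cast at hlb hsub ⊢; omega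
      · push_cast at hub hmono ⊢; omega
    have := Int.le_of_dvd hrange.1 hdvd
    omega

lemma seqOf_encode (n : ℕ) (hn : 2 ≤ n) (j : KLRSeq n) (hadm : Adm j) :
    seqOf n hn (encode j) = j := by
  set b := encode j with hbdef
  have main : ∀ q (hq : q < n), ((gseq n b q : ℤ) : ZMod n) = j.1 ⟨q, hq⟩ := by
    intro q
    induction q using Nat.strong_induction_on with
    | _ q IH =>
      intro hq
      cases q with
      | zero =>
        simp only [gseq]
        rw [hadm.1 (by omega)]
        simp
      | succ q' =>
        obtain ⟨m, hmlt, hadj⟩ := hadm.2 ⟨q' + 1, hq⟩ (by simp)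
        have hmv : m.val < q' + 1 := Fin.lt_def.mp hmlt
        have hmval : j.1 m = ((gseq n b m.val : ℤ) : ZMod n) :=
          (IH m.val hmv (by omega)).symm
        have hub := g_le n b m.val
        have hlb := g_ge n b m.val
        have hmono := ups_mono n b (show m.val ≤ q' by omega)
        have hsub := ups_sub n b (show m.val ≤ q' by omega)
        obtain ⟨w, hwval, hwInt⟩ : ∃ w : ℤ, j.1 ⟨q' + 1, hq⟩ = ((w : ℤ) : ZMod n)
            ∧ (w = gseq n b m.val + 1 ∨ w = gseq n b m.val - 1) := by
          rcases hadj with h1 | h2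
          · exact ⟨gseq n b m.val + 1, by rw [h1, hmval]; push_cast; ring, Or.inl rfl⟩
          · refine ⟨gseq n b m.val - 1, ?_, Or.inr rfl⟩
            have h3 : j.1 ⟨q' + 1, hq⟩ = j.1 m - 1 := by rw [← h2]; ring
            rw [h3, hmval]; push_cast; ring
        have hwub : w ≤ (ups n b q' : ℤ) + 1 := by
          push_cast at hub hmono ⊢; omega
        have hwlb : (ups n b q' : ℤ) - q' - 1 ≤ w := by
          push_cast at hlb hsub ⊢; omega
        have hwend : w = (ups n b q' : ℤ) + 1 ∨ w = (ups n b q' : ℤ) - q' - 1 := by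
          by_contra hcon
          push_neg at hcon
          obtain ⟨m', hm'le, hg'⟩ := g_cover n b q' w (by omega) (by omega)
          have hjeq : j.1 ⟨m', by omega⟩ = j.1 ⟨q' + 1, hq⟩ := by
            rw [← IH m' (by omega) (by omega), hg', hwval]
          have heqf := j.2.1 hjeq
          have : m' = q' + 1 := congrArg Fin.val heqf
          omega
        by_cases hq2 : q' < n - 2
        · rcases hwend with hw | hw
          · -- up move
            obtain ⟨m₀, hm₀, hg₀⟩ := g_cover n b q' (ups n b q') (by omega) le_rfl
            have hbit : bitB n b q' = true := by
              rw [show bitB n b q' = b ⟨q', hq2⟩ from by simp [bitB, hq2], hbdef]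
              simp only [encode]
              apply decide_eq_true
              refine ⟨⟨m₀, by omega⟩, by simpa using hm₀, ?_⟩
              rw [← IH m₀ (by omega) (by omega), hg₀]
              have : j.1 ⟨q' + 1, by have := (⟨q', hq2⟩ : Fin (n - 2)).isLt; omega⟩
                  = j.1 ⟨q' + 1, hq⟩ := rfl
              rw [this, hwval, hw]
              push_cast; ring
            have hgq : gseq n b (q' + 1) = (ups n b q' : ℤ) + 1 := by
              simp [gseq, ups, hbit]
            rw [hgq, hwval, hw]
          · -- down move
            have hbit : bitB n b q' = false := by
              rw [show bitB n b q' = b ⟨q', hq2⟩ from by simp [bitB, hq2], hbdef]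
              simp only [encode]
              apply decide_eq_false
              rintro ⟨m2, hm2, heq2⟩
              have hub2 := g_le n b m2.val
              have hlb2 := g_ge n b m2.val
              have hmono2 := ups_mono n b (show m2.val ≤ q' from hm2)
              have hsub2 := ups_sub n b (show m2.val ≤ q' from hm2)
              have heq3 : ((w : ℤ) : ZMod n) = ((gseq n b m2.val : ℤ) : ZMod n) + 1 := by
                calc ((w : ℤ) : ZMod n) = j.1 ⟨q' + 1, hq⟩ := hwval.symm
                  _ = j.1 m2 + 1 := heq2
                  _ = ((gseq n b m2.val : ℤ) : ZMod n) + 1 := by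
                      rw [← IH m2.val (by omega) m2.isLt]
              haveI : NeZero n := ⟨by omega⟩
              have hdvd : (n : ℤ) ∣ (gseq n b m2.val + 1 - w) := by
                apply (ZMod.intCast_zmod_eq_zero_iff_dvd _ _).mp
                push_cast
                rw [heq3]
                ring
              have hpos : 0 < gseq n b m2.val + 1 - w := by
                rw [hw]; push_cast at hlb2 hsub2 ⊢; omega
              have hlt2 : gseq n b m2.val + 1 - w < n := by
                rw [hw]; push_cast at hub2 hmono2 ⊢; omega
              have := Int.le_of_dvd hpos hdvd
              omega
            have hgq : gseq n b (q' + 1) = (ups n b q' : ℤ) - q' - 1 := by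
              have hU : ups n b (q' + 1) = ups n b q' := by simp [ups, hbit]
              simp [gseq, hbit, hU]
              push_cast; ring
            rw [hgq, hwval, hw]
        · -- last position: the two choices agree mod n
          have hq3 : q' = n - 2 := by omega
          have hbit : bitB n b q' = true := by simp [bitB, hq2]
          have hgq : gseq n b (q' + 1) = (ups n b q' : ℤ) + 1 := by
            simp [gseq, ups, hbit]
          rcases hwend with hw | hw
          · rw [hgq, hwval, hw]
          · rw [hgq, hwval, hw]
            have hred : ((ups n b q' : ℤ) - q' - 1) = ((ups n b q' : ℤ) + 1) - n := by
              have : (q' : ℤ) = (n : ℤ) - 2 := by omega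
              rw [this]; ring
            rw [hred]
            push_cast
            rw [ZMod.natCast_self]
            ring
  apply Subtype.ext
  funext p
  rw [seqOf_apply]
  have := main p.val p.isLt
  rw [this]

theorem adm_card (hn : 2 ≤ n) : Nat.card {j : KLRSeq n // Adm j} = 2 ^ (n - 2) := by
  have e : (Fin (n - 2) → Bool) ≃ {j : KLRSeq n // Adm j} :=
    { toFun := fun b => ⟨seqOf n hn b, adm_seqOf n hn b⟩
      invFun := fun j => encode j.1
      left_inv := fun b => encode_seqOf n hn b
      right_inv := fun j => Subtype.ext (seqOf_encode n hn j.1 j.2) }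
  rw [← Nat.card_congr e]
  simp [Nat.card_eq_fintype_card]

end Proof

/-- for `n ≥ 2`, the number of `i ∈ I_n` with `e(i) ≠ 0` in the cyclotomic
KLR algebra `R_n` is exactly `2^(n−2)`. -/
theorem stmt_0 (K : Type) [Field K] (n : ℕ) (hn : 2 ≤ n) :
    Nat.card {i : KLRSeq n // KLR.e K i ≠ 0} = 2 ^ (n - 2) := by
  have key : ∀ i : KLRSeq n, KLR.e K i ≠ 0 ↔ Adm i := fun i =>
    ⟨fun h => by_contra fun ha => h (e_eq_zero_of_not_adm K hn i ha),
     fun h => e_ne_zero_of_adm K hn i h⟩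
  rw [Nat.card_congr (Equiv.subtypeEquivRight key)]
  exact adm_card hn
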